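/- Let (S, ≤) be a partially ordered set. The set B(S,≤) of finitely generated lower subsets of S (lower sets that are the downward closure of a finite subset), with union as join, is the free B-module on the poset (S,≤): for any join-semilattice μ with bottom and any monotone map f : S → μ, there is a unique bottom-preserving join-homomorphism B(S,≤) → μ sending the principal lower set of x to f(x). -/

import Mathlib

/-- The finitely generated lower subsets of a preordered set `S`:
lower sets which are the downward closure of a finite subset. -/
def FGLower (S : Type*) [Preorder S] : Type _ :=
  {L : LowerSet S // ∃ F : Finset S, L = lowerClosure (F : Set S)}

namespace FGLower

variable {S : Type*} [Preorder S]

instance : SemilatticeSup (FGLower S) :=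
  Subtype.semilatticeSup fun L M ⟨F, hF⟩ ⟨G, hG⟩ => by
    classical
    exact ⟨F ∪ G, by simp [hF, hG, lowerClosure_union]⟩

instance : OrderBot (FGLower S) :=
  Subtype.orderBot ⟨∅, by simp⟩

/-- The principal finitely generated lower set on a point. -/
def pt (x : S) : FGLower S := ⟨lowerClosure {x}, ⟨{x}, by simp⟩⟩

end FGLower

section Aux

variable {S : Type*} [Preorder S] {μ : Type*} [SemilatticeSup μ] [OrderBot μ]
  (f : S → μ) (hf : Monotone f)

include hf in
lemma sup_le_of_lc_le {F G : Finset S}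
    (h : lowerClosure (F : Set S) ≤ lowerClosure (G : Set S)) :
    F.sup f ≤ G.sup f := by
  refine Finset.sup_le fun a ha => ?_
  have : a ∈ lowerClosure (G : Set S) := h (subset_lowerClosure ha)
  obtain ⟨b, hb, hab⟩ := this
  exact le_trans (hf hab) (Finset.le_sup hb)

include hf in
lemma sup_eq_of_lc_eq {F G : Finset S}
    (h : lowerClosure (F : Set S) = lowerClosure (G : Set S)) :
    F.sup f = G.sup f :=
  le_antisymm (sup_le_of_lc_le f hf h.le) (sup_le_of_lc_le f hf h.ge)

noncomputable def Hfun : FGLower S → μ := fun L => L.2.choose.sup f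

include hf in
lemma Hfun_spec (L : FGLower S) (F : Finset S)
    (hF : L.1 = lowerClosure (F : Set S)) : Hfun f L = F.sup f := by
  have h2 := L.2.choose_spec
  exact sup_eq_of_lc_eq f hf (h2 ▸ hF)

lemma val_sup (L M : FGLower S) : (L ⊔ M).1 = L.1 ⊔ M.1 := rfl

lemma pt_val (x : S) : (FGLower.pt x).1 = lowerClosure ({x} : Set S) := rfl

lemma sup_pt_val (F : Finset S) :
    (F.sup FGLower.pt : FGLower S).1 = lowerClosure (F : Set S) := by
  classical
  induction F using Finset.induction with
  | empty => simp; rfl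
  | insert a s _ ih =>
      rw [Finset.sup_insert, Finset.coe_insert, Set.insert_eq, lowerClosure_union, ← ih]
      rfl

end Aux

/-- `B(S,≤)`, the finitely generated lower subsets of a poset `(S,≤)`
with union as join, is the free `𝔹`-module on the poset `(S,≤)`: for any
join-semilattice `μ` with bottom and any monotone `f : S → μ`, there is a unique
bottom-preserving join-homomorphism `B(S,≤) → μ` sending the principal lower set of
`x` to `f x`. -/
theorem stmt1 {S : Type*} [PartialOrder S] {μ : Type*} [SemilatticeSup μ] [OrderBot μ]
    (f : S → μ) (hf : Monotone f) :
    ∃! h : SupBotHom (FGLower S) μ, ∀ x : S, h (FGLower.pt x) = f x := by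
  classical
  refine ⟨⟨⟨Hfun f, ?_⟩, ?_⟩, ?_, ?_⟩
  · intro L M
    obtain ⟨F, hF⟩ := L.2
    obtain ⟨G, hG⟩ := M.2
    have hsup : (L ⊔ M).1 = lowerClosure ((F ∪ G : Finset S) : Set S) := by
      rw [val_sup, hF, hG]
      simp [lowerClosure_union]
    simp only [Hfun_spec f hf _ _ hsup, Hfun_spec f hf _ _ hF, Hfun_spec f hf _ _ hG,
      Finset.sup_union]
  · have hbot : (⊥ : FGLower S).1 = lowerClosure ((∅ : Finset S) : Set S) := by simp; rfl
    simpa using Hfun_spec f hf _ _ hbot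
  · intro x
    have : (FGLower.pt x).1 = lowerClosure (({x} : Finset S) : Set S) := by simp [pt_val]
    simpa using Hfun_spec f hf _ _ this
  · intro g hg
    ext L
    obtain ⟨F, hF⟩ := L.2
    have hL : L = F.sup FGLower.pt := Subtype.ext (by rw [hF, sup_pt_val])
    have hmap : ∀ (F : Finset S), g (F.sup FGLower.pt) = F.sup f := by
      intro G
      rw [map_finset_sup]
      exact Finset.sup_congr rfl fun a _ => hg a
    rw [hL, hmap]
    exact (Hfun_spec f hf _ F (sup_pt_val F)).symm
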